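/- Let V be a finite set, r ∈ V, and ⪯ a partial order on V such that (i) r ⪯ w for all w ∈ V, and (ii) for all u,v,w ∈ V, if u ⪯ w and v ⪯ w then u ⪯ v or v ⪯ u. Then there exists a tree T with vertex set V such that for all u,x ∈ V, u ⪯ x if and only if u lies on the unique path in T from r to x. -/

import Mathlib

/-- `y` lies on the (unique) path in the graph `G` joining `x` and `z`. -/
def OnPath {V : Type*} (G : SimpleGraph V) (x y z : V) : Prop :=
  ∃ p : G.Walk x z, p.IsPath ∧ y ∈ p.support

/-- A finite nonempty set whose elements are pairwise comparable and on which the relation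
is reflexive and transitive has a top element. -/
lemma finset_chain_top {α : Type*} (le : α → α → Prop)
    (htrans : ∀ a b c, le a b → le b c → le a c)
    (s : Finset α) (hs : s.Nonempty) (hrefl : ∀ a ∈ s, le a a)
    (hcomp : ∀ a ∈ s, ∀ b ∈ s, le a b ∨ le b a) :
    ∃ m ∈ s, ∀ a ∈ s, le a m := by
  classical
  induction s using Finset.cons_induction with
  | empty => exact absurd hs (by simp)
  | cons x t hx ih =>
    rcases t.eq_empty_or_nonempty with rfl | ht
    · refine ⟨x, by simp, ?_⟩
      intro a ha
      have : a = x := by simpa using ha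
      subst this
      exact hrefl a (by simp)
    · obtain ⟨m, hm, hmax⟩ := ih ht (fun a ha => hrefl a (by simp [ha]))
        (fun a ha b hb => hcomp a (by simp [ha]) b (by simp [hb]))
      rcases hcomp x (by simp) m (by simp [hm]) with h | h
      · refine ⟨m, by simp [hm], ?_⟩
        intro a ha
        rcases Finset.mem_cons.mp ha with rfl | ha'
        · exact h
        · exact hmax a ha'
      · refine ⟨x, by simp, ?_⟩
        intro a ha
        rcases Finset.mem_cons.mp ha with rfl | ha'
        · exact hrefl a (by simp)
        · exact htrans a m x (hmax a ha') h

/-- A finite nonempty set has a maximal element with respect to a transitive antisymmetric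
relation. -/
lemma finset_maximal {α : Type*} (le : α → α → Prop)
    (hantisymm : ∀ a b, le a b → le b a → a = b)
    (htrans : ∀ a b c, le a b → le b c → le a c)
    (s : Finset α) (hs : s.Nonempty) :
    ∃ m ∈ s, ∀ a ∈ s, le m a → a = m := by
  classical
  induction s using Finset.cons_induction with
  | empty => exact absurd hs (by simp)
  | cons x t hx ih =>
    rcases t.eq_empty_or_nonempty with rfl | ht
    · refine ⟨x, by simp, ?_⟩
      intro a ha _
      simpa using ha
    · obtain ⟨m, hm, hmax⟩ := ih ht
      by_cases hmx : le m x
      · refine ⟨x, by simp, ?_⟩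
        intro a ha hxa
        rcases Finset.mem_cons.mp ha with rfl | ha'
        · rfl
        · have ham : a = m := hmax a ha' (htrans m x a hmx hxa)
          subst ham
          exact (hantisymm x a hxa hmx).symm
      · refine ⟨m, by simp [hm], ?_⟩
        intro a ha hma
        rcases Finset.mem_cons.mp ha with rfl | ha'
        · exact absurd hma hmx
        · exact hmax a ha' hma

theorem stmt_0 {V : Type*} [Fintype V] (r : V) (le : V → V → Prop)
    (hrefl : ∀ a, le a a)
    (hantisymm : ∀ a b, le a b → le b a → a = b)
    (htrans : ∀ a b c, le a b → le b c → le a c)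
    (hmin : ∀ w, le r w)
    (hchain : ∀ u v w, le u w → le v w → le u v ∨ le v u) :
    ∃ T : SimpleGraph V, T.IsTree ∧ ∀ u x, le u x ↔ OnPath T r u x := by
  classical
  -- parent existence
  have hparx : ∀ x, x ≠ r → ∃ m, (le m x ∧ m ≠ x) ∧ ∀ u, le u x → u ≠ x → le u m := by
    intro x hx
    obtain ⟨m, hm, hmax⟩ := finset_chain_top le htrans
      (Finset.univ.filter fun u => le u x ∧ u ≠ x)
      ⟨r, by simp [hmin x, Ne.symm hx]⟩
      (fun a _ => hrefl a)
      (by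
        intro a ha b hb
        simp only [Finset.mem_filter] at ha hb
        exact hchain a b x ha.2.1 hb.2.1)
    simp only [Finset.mem_filter, Finset.mem_univ, true_and] at hm
    refine ⟨m, hm, ?_⟩
    intro u hu hune
    exact hmax u (by simp [hu, hune])
  set par : V → V := fun x => if hx : x = r then r else (hparx x hx).choose with hpar_def
  have hpar1 : ∀ x, x ≠ r → le (par x) x ∧ par x ≠ x := by
    intro x hx
    simp only [hpar_def, dif_neg hx]
    exact (hparx x hx).choose_spec.1
  have hpar2 : ∀ x, x ≠ r → ∀ u, le u x → u ≠ x → le u (par x) := by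
    intro x hx
    simp only [hpar_def, dif_neg hx]
    exact (hparx x hx).choose_spec.2
  set T : SimpleGraph V := SimpleGraph.fromRel (fun a b => a = par b ∧ b ≠ r) with hT
  have hadj : ∀ a b, T.Adj a b ↔ a ≠ b ∧ ((a = par b ∧ b ≠ r) ∨ (b = par a ∧ a ≠ r)) := by
    intro a b
    simp [hT, SimpleGraph.fromRel_adj]
  have hadj_par : ∀ x, x ≠ r → T.Adj (par x) x := by
    intro x hx
    exact (hadj _ _).mpr ⟨(hpar1 x hx).2, Or.inl ⟨rfl, hx⟩⟩
  -- canonical walk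
  have key : ∀ x, ∃ w : T.Walk r x, w.IsPath ∧ ∀ u, u ∈ w.support ↔ le u x := by
    suffices H : ∀ n (x : V), (Finset.univ.filter fun u => le u x).card ≤ n →
        ∃ w : T.Walk r x, w.IsPath ∧ ∀ u, u ∈ w.support ↔ le u x from
      fun x => H _ x le_rfl
    intro n
    induction n with
    | zero =>
      intro x hx
      exact absurd hx (by
        simp only [not_le, Nat.pos_iff_ne_zero]
        intro h
        have : x ∈ (Finset.univ.filter fun u => le u x) := by simp [hrefl x]
        simp [Finset.card_eq_zero.mp h] at this)
    | succ n ih =>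
      intro x hx
      by_cases hxr : x = r
      · subst hxr
        refine ⟨SimpleGraph.Walk.nil, SimpleGraph.Walk.IsPath.nil, ?_⟩
        intro u
        simp only [SimpleGraph.Walk.support_nil, List.mem_singleton]
        constructor
        · rintro rfl; exact hrefl u
        · intro h; exact hantisymm u x h (hmin u)
      · obtain ⟨hle, hne⟩ := hpar1 x hxr
        have hmaxp := hpar2 x hxr
        have hcard : (Finset.univ.filter fun u => le u (par x)).card ≤ n := by
          have hss : (Finset.univ.filter fun u => le u (par x)) ⊂
              (Finset.univ.filter fun u => le u x) := by
            constructor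
            · intro u hu
              simp only [Finset.mem_filter, Finset.mem_univ, true_and] at hu ⊢
              exact htrans u (par x) x hu hle
            · intro hsub
              have : x ∈ (Finset.univ.filter fun u => le u (par x)) :=
                hsub (by simp [hrefl x])
              simp only [Finset.mem_filter, Finset.mem_univ, true_and] at this
              exact hne (hantisymm (par x) x hle this)
          have := Finset.card_lt_card hss
          omega
        obtain ⟨w, hwp, hws⟩ := ih (par x) hcard
        have hxnot : x ∉ w.support := by
          intro h
          exact hne (hantisymm (par x) x hle ((hws x).mp h))
        refine ⟨w.concat (hadj_par x hxr), ?_, ?_⟩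
        · rw [← SimpleGraph.Walk.isPath_reverse_iff, SimpleGraph.Walk.concat_eq_append,
            SimpleGraph.Walk.reverse_append]
          simp only [SimpleGraph.Walk.reverse_cons, SimpleGraph.Walk.reverse_nil,
            SimpleGraph.Walk.nil_append, SimpleGraph.Walk.cons_append]
          rw [SimpleGraph.Walk.cons_isPath_iff]
          refine ⟨by rwa [SimpleGraph.Walk.isPath_reverse_iff], ?_⟩
          rwa [SimpleGraph.Walk.support_reverse, List.mem_reverse]
        · intro u
          rw [SimpleGraph.Walk.support_concat, List.mem_append,
            List.mem_singleton]
          constructor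
          · rintro (h | rfl)
            · exact htrans u (par x) x ((hws u).mp h) hle
            · exact hrefl u
          · intro h
            by_cases hux : u = x
            · exact Or.inr hux
            · exact Or.inl ((hws u).mpr (hmaxp u h hux))
  -- connectivity
  have hconn : T.Connected := by
    rw [SimpleGraph.connected_iff]
    refine ⟨?_, ⟨r⟩⟩
    intro a b
    obtain ⟨wa, _, _⟩ := key a
    obtain ⟨wb, _, _⟩ := key b
    exact SimpleGraph.Walk.reachable (wa.reverse.append wb)
  -- acyclicity
  have hacyclic : T.IsAcyclic := by
    intro a c hc
    obtain ⟨m, hm, hmax⟩ := finset_maximal le hantisymm htrans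
      c.support.toFinset ⟨a, by simp⟩
    rw [List.mem_toFinset] at hm
    have hmax' : ∀ z ∈ c.support, le m z → z = m := fun z hz h =>
      hmax z (List.mem_toFinset.mpr hz) h
    have hq : (c.rotate m hm).IsCycle := hc.rotate hm
    have hq_support : ∀ z, z ∈ (c.rotate m hm).support → z ∈ c.support := by
      intro z hz
      rw [SimpleGraph.Walk.support_eq_cons] at hz
      rcases List.mem_cons.mp hz with rfl | h
      · exact hm
      · exact List.mem_of_mem_tail ((SimpleGraph.Walk.support_rotate c m hm).mem_iff.mp h)
    have hedge : ∀ z, z ∈ c.support → T.Adj z m → z = par m := by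
      intro z hz hzm
      rcases (hadj z m).mp hzm with ⟨hne, h | h⟩
      · exact h.1
      · exfalso
        have hlemz : le m z := by rw [h.1]; exact (hpar1 z h.2).1
        exact hne (hmax' z hz hlemz)
    obtain ⟨b, hab, p, hqe⟩ := SimpleGraph.Walk.not_nil_iff.mp hq.not_nil
    rw [hqe, SimpleGraph.Walk.cons_isCycle_iff] at hq
    obtain ⟨hpp, hnotedge⟩ := hq
    have hbsup : b ∈ c.support := by
      apply hq_support
      rw [hqe, SimpleGraph.Walk.support_cons]
      exact List.mem_cons_of_mem _ p.start_mem_support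
    have hb : b = par m := hedge b hbsup hab.symm
    have hbm : b ≠ m := hab.ne'
    have hpn : ¬ p.reverse.Nil := SimpleGraph.Walk.not_nil_of_ne (Ne.symm hbm)
    obtain ⟨z, hmz, p2, hpe⟩ := SimpleGraph.Walk.not_nil_iff.mp hpn
    have hzm_edge : s(z, m) ∈ p.edges := by
      have h1 : s(m, z) ∈ p.reverse.edges := by
        rw [hpe, SimpleGraph.Walk.edges_cons]
        exact List.mem_cons_self
      rw [SimpleGraph.Walk.edges_reverse, List.mem_reverse] at h1
      rwa [Sym2.eq_swap] at h1
    have hzsup : z ∈ c.support := by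
      apply hq_support
      rw [hqe, SimpleGraph.Walk.support_cons]
      exact List.mem_cons_of_mem _ (p.fst_mem_support_of_mem_edges hzm_edge)
    have hz : z = par m := hedge z hzsup hmz.symm
    apply hnotedge
    rw [show s(m, b) = s(z, m) by rw [hb, ← hz, Sym2.eq_swap]]
    exact hzm_edge
  -- conclusion
  refine ⟨T, ⟨hconn, hacyclic⟩, ?_⟩
  intro u x
  obtain ⟨w, hwp, hws⟩ := key x
  constructor
  · intro h
    exact ⟨w, hwp, (hws u).mpr h⟩
  · rintro ⟨q, hqp, hqu⟩
    obtain ⟨p, -, hp⟩ := (SimpleGraph.isTree_iff_existsUnique_path.mp ⟨hconn, hacyclic⟩).2 r x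
    rw [hp q hqp, ← hp w hwp] at hqu
    exact (hws u).mp hqu
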